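/- (Theorem 1) Let h_1,…,h_K > 0, σ² > 0, P > 0. Then ∑_{k=1}^K σ²/(σ² + P h_k²) is the least element of the set { ∑_{k=1}^K (g h_k b_k − 1)² + σ² g² : g ∈ ℝ, b ∈ ℝ^K, ∑_{k=1}^K b_k² ≤ P }; i.e., every feasible (g, b) has MSE at least ∑_{k=1}^K σ²/(σ² + P h_k²), and this value is attained (at g* = sqrt((1/P)∑_k (P h_k/(σ²+P h_k²))²) and b*_k = (P h_k/(σ²+P h_k²))·sqrt(P/∑_j (P h_j/(σ²+P h_j²))²)). -/

import Mathlib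

lemma aircomp_key (h σ2 P g b : ℝ) (hσ2 : 0 < σ2) (hP : 0 < P) :
    σ2 / (σ2 + P * h ^ 2) ≤ (g * h * b - 1) ^ 2 + σ2 * g ^ 2 * b ^ 2 / P := by
  have hd : 0 < σ2 + P * h ^ 2 := by positivity
  rw [div_le_iff₀ hd, ← sub_nonneg]
  have key := sq_nonneg ((σ2 + P * h ^ 2) * (g * b) - P * h)
  have hP' : P ≠ 0 := ne_of_gt hP
  field_simp
  rw [zero_mul]
  nlinarith [key, hP]

lemma aircomp_term (h σ2 P : ℝ) (hσ2 : 0 < σ2) (hP : 0 < P) (hh : 0 < h) :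
    (h * (P * h / (σ2 + P * h ^ 2)) - 1) ^ 2
      + σ2 * (P * h / (σ2 + P * h ^ 2)) ^ 2 / P = σ2 / (σ2 + P * h ^ 2) := by
  have hd : (σ2 + P * h ^ 2) ≠ 0 := by positivity
  field_simp
  ring

/-- **Theorem 1.** `∑ k σ²/(σ² + P h k²)` is the least element of the set of
achievable MSE values under the sum-power constraint `∑ k (b k)² ≤ P`, and it is attained
at `g* = sqrt((1/P) ∑ k (P h k/(σ² + P h k²))²)` and
`b* k = (P h k/(σ² + P h k²)) · sqrt(P / ∑ j (P h j/(σ² + P h j²))²)`. -/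
theorem aircomp_theorem1 (K : ℕ) (h : Fin K → ℝ) (hh : ∀ k, 0 < h k)
    (σ2 P : ℝ) (hσ2 : 0 < σ2) (hP : 0 < P) :
    IsLeast {m : ℝ | ∃ (g : ℝ) (b : Fin K → ℝ), (∑ k, b k ^ 2) ≤ P ∧
        m = (∑ k, (g * h k * b k - 1) ^ 2) + σ2 * g ^ 2}
      (∑ k, σ2 / (σ2 + P * h k ^ 2))
    ∧ (∑ k, ((Real.sqrt ((1 / P) * ∑ j, (P * h j / (σ2 + P * h j ^ 2)) ^ 2)) * h k *
          ((P * h k / (σ2 + P * h k ^ 2)) *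
            Real.sqrt (P / ∑ j, (P * h j / (σ2 + P * h j ^ 2)) ^ 2)) - 1) ^ 2)
        + σ2 * (Real.sqrt ((1 / P) * ∑ j, (P * h j / (σ2 + P * h j ^ 2)) ^ 2)) ^ 2
        = ∑ k, σ2 / (σ2 + P * h k ^ 2)
    ∧ (∑ k, ((P * h k / (σ2 + P * h k ^ 2)) *
          Real.sqrt (P / ∑ j, (P * h j / (σ2 + P * h j ^ 2)) ^ 2)) ^ 2) ≤ P := by
  have hd : ∀ k, 0 < σ2 + P * h k ^ 2 := fun k => by positivity
  -- attainment and power feasibility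
  have hattain :
      (∑ k, ((Real.sqrt ((1 / P) * ∑ j, (P * h j / (σ2 + P * h j ^ 2)) ^ 2)) * h k *
          ((P * h k / (σ2 + P * h k ^ 2)) *
            Real.sqrt (P / ∑ j, (P * h j / (σ2 + P * h j ^ 2)) ^ 2)) - 1) ^ 2)
        + σ2 * (Real.sqrt ((1 / P) * ∑ j, (P * h j / (σ2 + P * h j ^ 2)) ^ 2)) ^ 2
        = ∑ k, σ2 / (σ2 + P * h k ^ 2)
      ∧ (∑ k, ((P * h k / (σ2 + P * h k ^ 2)) *
          Real.sqrt (P / ∑ j, (P * h j / (σ2 + P * h j ^ 2)) ^ 2)) ^ 2) ≤ P := by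
    rcases Nat.eq_zero_or_pos K with hK | hK
    · subst hK
      simp [hP.le]
    · set S : ℝ := ∑ j, (P * h j / (σ2 + P * h j ^ 2)) ^ 2 with hS
      have hSpos : 0 < S := by
        apply Finset.sum_pos
        · intro k _
          have := hd k
          have := hh k
          positivity
        · have : Nonempty (Fin K) := Fin.pos_iff_nonempty.mp hK
          exact Finset.univ_nonempty
      have hA : (Real.sqrt ((1 / P) * S)) ^ 2 = (1 / P) * S :=
        Real.sq_sqrt (by positivity)
      have hB : (Real.sqrt (P / S)) ^ 2 = P / S := Real.sq_sqrt (by positivity)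
      have hprod : Real.sqrt ((1 / P) * S) * Real.sqrt (P / S) = 1 := by
        rw [← Real.sqrt_mul (by positivity)]
        rw [show (1 / P) * S * (P / S) = 1 by field_simp]
        exact Real.sqrt_one
      constructor
      · have hterm : ∀ k : Fin K,
            ((Real.sqrt ((1 / P) * S)) * h k *
              ((P * h k / (σ2 + P * h k ^ 2)) * Real.sqrt (P / S)) - 1) ^ 2
            = (h k * (P * h k / (σ2 + P * h k ^ 2)) - 1) ^ 2 := by
          intro k
          rw [show (Real.sqrt ((1 / P) * S)) * h k *
              ((P * h k / (σ2 + P * h k ^ 2)) * Real.sqrt (P / S))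
            = (Real.sqrt ((1 / P) * S) * Real.sqrt (P / S)) *
              (h k * (P * h k / (σ2 + P * h k ^ 2))) by ring, hprod, one_mul]
        rw [Finset.sum_congr rfl (fun k _ => hterm k), hA]
        have : σ2 * ((1 / P) * S) = ∑ k, σ2 * (P * h k / (σ2 + P * h k ^ 2)) ^ 2 / P := by
          rw [hS, Finset.mul_sum, Finset.mul_sum]
          refine Finset.sum_congr rfl fun k _ => by ring
        rw [this, ← Finset.sum_add_distrib]
        exact Finset.sum_congr rfl fun k _ => aircomp_term (h k) σ2 P hσ2 hP (hh k)
      · have : ∀ k : Fin K,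
            ((P * h k / (σ2 + P * h k ^ 2)) * Real.sqrt (P / S)) ^ 2
            = (P * h k / (σ2 + P * h k ^ 2)) ^ 2 * (P / S) := by
          intro k; rw [mul_pow, hB]
        rw [Finset.sum_congr rfl (fun k _ => this k), ← Finset.sum_mul, ← hS]
        rw [show S * (P / S) = P by field_simp]
  refine ⟨⟨⟨_, _, hattain.2, hattain.1.symm⟩, ?_⟩, hattain.1, hattain.2⟩
  rintro m ⟨g, b, hb, rfl⟩
  have step1 : (∑ k, σ2 / (σ2 + P * h k ^ 2)) ≤
      ∑ k, ((g * h k * b k - 1) ^ 2 + σ2 * g ^ 2 * (b k) ^ 2 / P) := by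
    refine Finset.sum_le_sum fun k _ => ?_
    have := aircomp_key (h k) σ2 P g (b k) hσ2 hP
    calc σ2 / (σ2 + P * h k ^ 2)
        ≤ (g * h k * b k - 1) ^ 2 + σ2 * g ^ 2 * (b k) ^ 2 / P := by
          have h2 : g * h k * b k = g * (h k) * (b k) := by ring
          nlinarith [aircomp_key (h k) σ2 P g (b k) hσ2 hP]
      _ = _ := rfl
  have step2 : ∑ k, ((g * h k * b k - 1) ^ 2 + σ2 * g ^ 2 * (b k) ^ 2 / P)
      = (∑ k, (g * h k * b k - 1) ^ 2) + σ2 * g ^ 2 * (∑ k, (b k) ^ 2) / P := by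
    rw [Finset.sum_add_distrib, Finset.mul_sum, Finset.sum_div]
  have step3 : σ2 * g ^ 2 * (∑ k, (b k) ^ 2) / P ≤ σ2 * g ^ 2 := by
    rw [div_le_iff₀ hP]
    nlinarith [mul_le_mul_of_nonneg_left hb (by positivity : (0:ℝ) ≤ σ2 * g ^ 2)]
  linarith [step1, step2 ▸ step1]
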